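/- Let V be a finite set of Boolean variables, W : V × {0,1} → F a weight function into a field F, and v ∈ V. Let v' ∉ V be a fresh Boolean variable and define W' : (V ∪ {v'}) × {0,1} → F by W'(u, b) = W(u, b) for all u ∈ V and b ∈ {0,1} except W'(v, 0) = 2·W(v, 0), and W'(v', 0) = 1/2, W'(v', 1) = 1. Then for every Boolean formula φ over V, WMC(φ ∧ (v ↔ v'), W') = WMC(φ, W). -/

import Mathlib

/-- The weighted model count of a Boolean formula `φ` over a finite set of Boolean
variables `V` with respect to a weight function `W : V × Bool → F`:
`WMC(φ, W) = ∑_{τ ⊨ φ} ∏_{v ∈ V} W(v, τ(v))`. -/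
def WMC {V : Type*} [Fintype V] [DecidableEq V] {F : Type*} [Field F]
    (φ : (V → Bool) → Bool) (W : V → Bool → F) : F :=
  ∑ τ : V → Bool, if φ τ then ∏ v : V, W v (τ v) else 0

/-- Adding a fresh variable `v'` (the `Unit` summand), tying it to `v`
via `v ↔ v'`, doubling `W(v,0)` and giving `v'` the weights `1/2` (false) and `1`
(true) leaves the weighted model count unchanged.  (`F` has characteristic ≠ 2.) -/
theorem wmc_fresh_var_rescale {V : Type*} [Fintype V] [DecidableEq V]
    {F : Type*} [Field F] (h2 : (2 : F) ≠ 0)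
    (W : V → Bool → F) (v : V) :
    ∀ φ : (V → Bool) → Bool,
      WMC (fun τ : V ⊕ Unit → Bool =>
          φ (fun u => τ (Sum.inl u)) && (τ (Sum.inl v) == τ (Sum.inr ())))
        (Sum.elim
          (fun u b => if u = v ∧ b = false then 2 * W u b else W u b)
          (fun _ b => if b then 1 else 1 / 2))
      = WMC φ W := by
  intro φ
  unfold WMC
  rw [← Equiv.sum_comp (⟨fun p => Sum.elim p.1 (fun _ => p.2),
      fun τ => (fun u => τ (Sum.inl u), τ (Sum.inr ())),
      Function.leftInverse_iff_comp.mpr rfl,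
      Function.rightInverse_iff_comp.mpr (by funext τ x; cases x <;> rfl)⟩ :
      ((V → Bool) × Bool) ≃ (V ⊕ Unit → Bool))]
  rw [Fintype.sum_prod_type]
  refine Finset.sum_congr rfl fun σ _ => ?_
  rw [Fintype.sum_bool]
  simp only [Equiv.coe_fn_mk, Sum.elim_inl, Sum.elim_inr, Fintype.prod_sum_type,
    Finset.univ_unique, Finset.prod_singleton, PUnit.default_eq_unit]
  cases hv : σ v <;> simp only [hv, beq_iff_eq, Bool.and_eq_true, decide_eq_true_eq]
  · simp only [Bool.false_eq_true, and_false, if_false, and_true, zero_add,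
      if_true, if_false]
    split
    · rw [Finset.prod_eq_mul_prod_sdiff_singleton_of_mem (Finset.mem_univ v)
        (f := fun u => if u = v ∧ σ u = false then 2 * W u (σ u) else W u (σ u)),
        Finset.prod_eq_mul_prod_sdiff_singleton_of_mem (Finset.mem_univ v) (f := fun u => W u (σ u))]
      have h3 : ∀ u ∈ Finset.univ \ {v},
          (if u = v ∧ σ u = false then 2 * W u (σ u) else W u (σ u)) = W u (σ u) := by
        intro u hu
        simp only [Finset.mem_sdiff, Finset.mem_singleton] at hu
        simp [hu.2]
      rw [Finset.prod_congr rfl h3]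
      simp only [hv, and_self, if_true]
      field_simp
    · rename_i h; simp_all
  · simp only [Bool.true_eq_false, and_false, if_false, and_true, add_zero, if_true]
    split
    · rename_i h
      simp only [h, if_true, mul_one]
      refine Finset.prod_congr rfl fun u _ => ?_
      by_cases huv : u = v <;> simp [huv, hv]
    · rename_i h; simp_all
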